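/- Let n ≥ 2 and let G be a saturated tropical curve in the interior K° of the standard n-simplex K ⊂ ℝ^n, of degree d. Let z^{(1)}, …, z^{(l)} be the intersection points of the closure Ḡ with the facet of K contained in the hyperplane {x_1 + … + x_n = 1}, with multiplicities m^{(1)}, …, m^{(l)} (so m^{(1)} + … + m^{(l)} = d). Fix i ∈ {1, …, n} and ζ ∈ (0,1) such that no vertex of G has i-th coordinate equal to ζ and no z^{(k)} has i-th coordinate equal to ζ. Then Σ_e |w_e^i| = d − Σ_{k : z_i^{(k)} < ζ} m^{(k)}, where the left-hand sum runs over all edges e of G having points with i-th coordinate strictly less than ζ and points with i-th coordinate strictly greater than ζ, and z_i^{(k)} denotes the i-th coordinate of z^{(k)}. -/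

import Mathlib

open Set MeasureTheory
open scoped ENNReal NNReal Classical

noncomputable section

/-- Euclidean space `ℝ^n`. -/
abbrev Euc (n : ℕ) := EuclideanSpace ℝ (Fin n)

/-- The real vector in `ℝ^n` corresponding to an integer vector. -/
def intVec {n : ℕ} (w : Fin n → ℤ) : Euc n := WithLp.toLp 2 (fun i => (w i : ℝ))

/-- An edge of a tropical curve: its carrier set, its set of endpoints (lying in the
ambient open set), and a chosen integer representative of its weight
(the weight is really the class of `weight` up to sign). -/
structure TropEdge (n : ℕ) where
  carrier : Set (Euc n)
  ends : Finset (Euc n)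
  weight : Fin n → ℤ

namespace TropEdge

/-- The real vector corresponding to the chosen representative of the weight. -/
def wR {n : ℕ} (e : TropEdge n) : Euc n := intVec e.weight

/-- The multiplicity of an edge: the natural number `|k|` such that the weight is
`k` times a primitive integral vector, i.e. the gcd of its components. -/
def mult {n : ℕ} (e : TropEdge n) : ℕ :=
  Finset.univ.gcd fun i => (e.weight i).natAbs

end TropEdge

/-- The half-open segment/ray `{v + t • u : 0 ≤ t < T}`, where `T ∈ (0, ∞]`. -/
def rayTo {n : ℕ} (v u : Euc n) (T : ℝ≥0∞) : Set (Euc n) :=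
  {x | ∃ t : ℝ, 0 ≤ t ∧ ENNReal.ofReal t < T ∧ x = v + t • u}

/-- A tropical curve in an open subset `U ⊆ ℝ^n`: a finite vertex set, a finite edge
set, each edge an internal edge (a closed segment contained in `U` with two distinct
vertices as endpoints) or an unbounded edge (`{v + t • u : 0 ≤ t < T} ∩ U` whose
closure is not contained in `U`), with weights parallel to the edge directions;
distinct edges meet only in common vertices, every vertex lies on at least three
edges, and the balancing condition holds at every vertex. -/
structure TropicalCurve (n : ℕ) (U : Set (Euc n)) : Type where
  verts : Finset (Euc n)
  edges : Finset (TropEdge n)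
  verts_mem : ∀ v ∈ verts, v ∈ U
  weight_ne : ∀ e ∈ edges, e.weight ≠ 0
  edge_shape : ∀ e ∈ edges,
    (∃ a ∈ verts, ∃ b ∈ verts, a ≠ b ∧ e.ends = {a, b} ∧
      e.carrier = segment ℝ a b ∧ segment ℝ a b ⊆ U ∧
      ∃ c : ℝ, c ≠ 0 ∧ b - a = c • e.wR) ∨
    (∃ v ∈ verts, ∃ u : Euc n, u ≠ 0 ∧ ∃ T : ℝ≥0∞, 0 < T ∧
      e.ends = {v} ∧ e.carrier = rayTo v u T ∩ U ∧
      ¬ closure (rayTo v u T ∩ U) ⊆ U ∧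
      ∃ c : ℝ, c ≠ 0 ∧ u = c • e.wR)
  edges_meet : ∀ e ∈ edges, ∀ f ∈ edges, e ≠ f →
    ∀ x ∈ e.carrier ∩ f.carrier, x ∈ verts
  three_valent : ∀ v ∈ verts, 3 ≤ (edges.filter fun e => v ∈ e.ends).card
  balanced : ∀ v ∈ verts, ∃ ε : TropEdge n → ℤ,
    (∀ e ∈ edges, v ∈ e.ends →
      (ε e = 1 ∨ ε e = -1) ∧
      ∃ δ : ℝ, 0 < δ ∧ ∀ t : ℝ, 0 < t → t < δ →
        v + (t * (ε e : ℝ)) • e.wR ∈ e.carrier) ∧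
    ∑ e ∈ edges.filter (fun e => v ∈ e.ends), ε e • e.weight = 0

namespace TropicalCurve

variable {n : ℕ} {U : Set (Euc n)}

/-- The underlying set of a tropical curve: the union of the carriers of its edges. -/
def support (G : TropicalCurve n U) : Set (Euc n) :=
  ⋃ e ∈ G.edges, e.carrier

/-- The tropical area of the part of `G` lying in `W`:
`∑_e length(e ∩ W) · ‖w_e‖` (computed with the one-dimensional Hausdorff measure,
with values in `[0, ∞]`). -/
def areaOn (G : TropicalCurve n U) (W : Set (Euc n)) : ℝ≥0∞ :=
  ∑ e ∈ G.edges, μH[1] (e.carrier ∩ W) * (‖e.wR‖₊ : ℝ≥0∞)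

/-- The tropical area of `G`: `∑_e length(e) · ‖w_e‖`. -/
def area (G : TropicalCurve n U) : ℝ≥0∞ :=
  ∑ e ∈ G.edges, μH[1] e.carrier * (‖e.wR‖₊ : ℝ≥0∞)

end TropicalCurve

/-- The standard `n`-simplex: the convex hull of `0` and the standard basis vectors. -/
def stdSimp (n : ℕ) : Set (Euc n) :=
  convexHull ℝ (insert (0 : Euc n) {x | ∃ i : Fin n, x = EuclideanSpace.single i (1 : ℝ)})

/-- The `n+1` facets of the standard simplex: for `i < n` the facet in `{x_i = 0}`,
and for `i = n` the facet in `{x_1 + ⋯ + x_n = 1}`. -/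
def sFacet (n : ℕ) (i : Fin (n + 1)) : Set (Euc n) :=
  if h : (i : ℕ) < n then stdSimp n ∩ {x | x ⟨i, h⟩ = 0}
  else stdSimp n ∩ {x | ∑ j, x j = 1}

/-- The `(n-2)`-skeleton of the boundary of the standard simplex: the union of all
faces of dimension at most `n - 2`, i.e. of all pairwise intersections of facets. -/
def sSkel (n : ℕ) : Set (Euc n) :=
  ⋃ i : Fin (n + 1), ⋃ j : Fin (n + 1), ⋃ _ : i ≠ j, sFacet n i ∩ sFacet n j

/-- The inward integral normal direction of the `i`-th facet of the standard simplex. -/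
def sNormal (n : ℕ) (i : Fin (n + 1)) : Fin n → ℤ :=
  if h : (i : ℕ) < n then Pi.single ⟨i, h⟩ 1 else fun _ => 1

/-- A tropical curve in the interior of the standard simplex is saturated if its closure
avoids the `(n-2)`-skeleton of the boundary and meets the facets perpendicularly:
every edge whose closure meets a facet has weight parallel to the normal of that facet. -/
def Saturated {n : ℕ} (G : TropicalCurve n (interior (stdSimp n))) : Prop :=
  closure G.support ∩ sSkel n = ∅ ∧
  ∀ e ∈ G.edges, ∀ i : Fin (n + 1),
    (closure e.carrier ∩ sFacet n i).Nonempty →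
    ∃ k : ℤ, e.weight = k • sNormal n i

/-- The number of intersection points of the closure of `G` with the `i`-th facet of the
standard simplex, counted with the multiplicities of the corresponding edges. -/
def facetCount {n : ℕ} (G : TropicalCurve n (interior (stdSimp n)))
    (i : Fin (n + 1)) : ℕ :=
  ∑ e ∈ G.edges.filter (fun e => (closure e.carrier ∩ sFacet n i).Nonempty), e.mult

-- Part A: simplex geometry
section Simplex

variable {n : ℕ}

lemma intVec_apply (w : Fin n → ℤ) (i : Fin n) : intVec w i = (w i : ℝ) := rfl

lemma intVec_eq_zero_iff {w : Fin n → ℤ} : intVec w = 0 ↔ w = 0 := by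
  constructor
  · intro h
    funext i
    have := congrArg (fun x : Euc n => x i) h
    simpa [intVec] using this
  · rintro rfl; refine PiLp.ext fun i => ?_; simp [intVec]

lemma euc_sum_single (x : Euc n) : ∑ j, x j • EuclideanSpace.single j (1:ℝ) = x := by
  refine PiLp.ext fun k => ?_
  show (EuclideanSpace.proj (𝕜 := ℝ) k) (∑ j, x j • EuclideanSpace.single j (1:ℝ)) = x k
  rw [map_sum]
  simp [EuclideanSpace.single_apply]

lemma stdSimp_eq : stdSimp n = {x : Euc n | (∀ j, 0 ≤ x j) ∧ ∑ j, x j ≤ 1} := by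
  apply Set.Subset.antisymm
  · apply convexHull_min
    · rintro x (rfl | ⟨i, rfl⟩)
      · constructor
        · intro j; simp
        · simp
      · constructor
        · intro j; rw [EuclideanSpace.single_apply]; positivity
        · rw [show ∑ j, (EuclideanSpace.single i (1:ℝ)) j = 1 by
            simp [EuclideanSpace.single_apply]]
    · intro x hx y hy a b ha hb hab
      constructor
      · intro j
        have : (a • x + b • y) j = a * x j + b * y j := rfl
        rw [this]
        have := hx.1 j; have := hy.1 j
        positivity
      · have : ∑ j, (a • x + b • y) j = a * ∑ j, x j + b * ∑ j, y j := by
          rw [Finset.mul_sum, Finset.mul_sum, ← Finset.sum_add_distrib]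
          rfl
        rw [this]
        calc a * ∑ j, x j + b * ∑ j, y j ≤ a * 1 + b * 1 := by
              apply add_le_add
              · exact mul_le_mul_of_nonneg_left hx.2 ha
              · exact mul_le_mul_of_nonneg_left hy.2 hb
          _ = 1 := by rw [mul_one, mul_one, hab]
  · rintro x ⟨hx0, hx1⟩
    by_cases hs : ∑ j, x j = 0
    · have hx : x = 0 := by
        have : ∀ j ∈ Finset.univ, x j = 0 := by
          intro j _
          exact le_antisymm (hs ▸ Finset.single_le_sum (fun k _ => hx0 k) (Finset.mem_univ j)) (hx0 j)
        refine PiLp.ext fun k => this k (Finset.mem_univ k)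
      rw [hx]
      exact subset_convexHull ℝ _ (Set.mem_insert _ _)
    · have hspos : 0 < ∑ j, x j := lt_of_le_of_ne (Finset.sum_nonneg fun j _ => hx0 j) (Ne.symm hs)
      set c := ∑ j, x j with hc
      set y : Euc n := c⁻¹ • x with hy
      have hy_mem : y ∈ convexHull ℝ
          (insert (0 : Euc n) {x | ∃ i : Fin n, x = EuclideanSpace.single i (1 : ℝ)}) := by
        have := Finset.centerMass_mem_convexHull (t := (Finset.univ : Finset (Fin n)))
          (w := fun j => y j) (z := fun j => EuclideanSpace.single j (1:ℝ))
          (s := insert (0 : Euc n) {x | ∃ i : Fin n, x = EuclideanSpace.single i (1 : ℝ)})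
          (fun j _ => by
            show (0:ℝ) ≤ c⁻¹ * x j
            exact mul_nonneg (inv_nonneg.2 hspos.le) (hx0 j))
          (by
            have hyj : ∀ j, y j = c⁻¹ * x j := fun j => rfl
            simp only [hyj]
            rw [← Finset.mul_sum, ← hc, inv_mul_cancel₀ hs]
            norm_num)
          (fun j _ => Set.mem_insert_of_mem _ ⟨j, rfl⟩)
        rwa [Finset.centerMass_eq_of_sum_1, euc_sum_single] at this
        · have hyj : ∀ j, y j = c⁻¹ * x j := fun j => rfl
          simp only [hyj]
          rw [← Finset.mul_sum, ← hc, inv_mul_cancel₀ hs]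
      have h0_mem : (0 : Euc n) ∈ convexHull ℝ
          (insert (0 : Euc n) {x | ∃ i : Fin n, x = EuclideanSpace.single i (1 : ℝ)}) :=
        subset_convexHull ℝ _ (Set.mem_insert _ _)
      have := (convex_convexHull ℝ
        (insert (0 : Euc n) {x | ∃ i : Fin n, x = EuclideanSpace.single i (1 : ℝ)}))
        hy_mem h0_mem (le_of_lt hspos) (by linarith : (0:ℝ) ≤ 1 - c) (by ring)
      have hxy : c • y + (1 - c) • (0 : Euc n) = x := by
        rw [hy, smul_smul, mul_inv_cancel₀ hs, one_smul, smul_zero, add_zero]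
      rwa [hxy] at this

end Simplex
-- Part B: interior of the simplex, facets, skeleton
section Simplex2

variable {n : ℕ}

lemma isClosed_stdSimp : IsClosed (stdSimp n) := by
  have hfin : (insert (0 : Euc n) {x | ∃ i : Fin n, x = EuclideanSpace.single i (1 : ℝ)}).Finite := by
    apply Set.Finite.insert
    have h : {x : Euc n | ∃ i : Fin n, x = EuclideanSpace.single i (1 : ℝ)}
        = Set.range (fun i : Fin n => EuclideanSpace.single i (1:ℝ)) := by
      ext x; simp [Set.range, eq_comm]
    rw [h]; exact Set.finite_range _
  exact (hfin.isCompact_convexHull ℝ).isClosed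

lemma convex_stdSimp : Convex ℝ (stdSimp n) := convex_convexHull ℝ _

lemma convex_interior_stdSimp : Convex ℝ (interior (stdSimp n)) :=
  convex_stdSimp.interior

def sumCLM (n : ℕ) : Euc n →L[ℝ] ℝ := ∑ j : Fin n, EuclideanSpace.proj j

lemma sumCLM_apply (x : Euc n) : sumCLM n x = ∑ j, x j := by
  simp [sumCLM, ContinuousLinearMap.sum_apply]

lemma interior_halfspace_coord (j : Fin n) :
    interior {y : Euc n | 0 ≤ y j} = {y : Euc n | 0 < y j} := by
  have hf : (EuclideanSpace.proj (𝕜 := ℝ) j : Euc n →L[ℝ] ℝ) ≠ 0 := by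
    intro h
    have h2 : (EuclideanSpace.proj (𝕜 := ℝ) j) (EuclideanSpace.single j (1:ℝ)) = 0 := by
      rw [h]; rfl
    have h3 : (EuclideanSpace.proj (𝕜 := ℝ) j) (EuclideanSpace.single j (1:ℝ)) = 1 := by
      show (EuclideanSpace.single j (1:ℝ)) j = 1
      simp [EuclideanSpace.single_apply]
    rw [h3] at h2; norm_num at h2
  have h := ((EuclideanSpace.proj (𝕜 := ℝ) j).isOpenMap_of_ne_zero hf).preimage_interior_eq_interior_preimage
    (EuclideanSpace.proj (𝕜 := ℝ) j).continuous (Set.Ici (0:ℝ))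
  have e1 : {y : Euc n | 0 ≤ y j} = (EuclideanSpace.proj (𝕜 := ℝ) j) ⁻¹' (Set.Ici (0:ℝ)) := rfl
  have e2 : {y : Euc n | 0 < y j} = (EuclideanSpace.proj (𝕜 := ℝ) j) ⁻¹' (Set.Ioi (0:ℝ)) := rfl
  rw [e1, e2, ← h, interior_Ici]

lemma interior_halfspace_sum (hn : 0 < n) :
    interior {y : Euc n | ∑ j, y j ≤ 1} = {y : Euc n | ∑ j, y j < 1} := by
  have hf : sumCLM n ≠ 0 := by
    intro h
    have h2 : sumCLM n (EuclideanSpace.single ⟨0, hn⟩ (1:ℝ)) = 0 := by rw [h]; rfl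
    rw [sumCLM_apply] at h2
    simp [EuclideanSpace.single_apply] at h2
  have h := ((sumCLM n).isOpenMap_of_ne_zero hf).preimage_interior_eq_interior_preimage
    (sumCLM n).continuous (Set.Iic (1:ℝ))
  have e1 : {y : Euc n | ∑ j, y j ≤ 1} = (sumCLM n) ⁻¹' (Set.Iic (1:ℝ)) := by
    ext y; simp [sumCLM_apply]
  have e2 : {y : Euc n | ∑ j, y j < 1} = (sumCLM n) ⁻¹' (Set.Iio (1:ℝ)) := by
    ext y; simp [sumCLM_apply]
  rw [e1, e2, ← h, interior_Iic]

lemma interior_stdSimp (hn : 0 < n) :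
    interior (stdSimp n) = {x : Euc n | (∀ j, 0 < x j) ∧ ∑ j, x j < 1} := by
  apply Set.Subset.antisymm
  · intro x hx
    constructor
    · intro j
      have hsub : stdSimp n ⊆ {y : Euc n | 0 ≤ y j} := by
        rw [stdSimp_eq]; exact fun y hy => hy.1 j
      have := interior_mono hsub hx
      rwa [interior_halfspace_coord] at this
    · have hsub : stdSimp n ⊆ {y : Euc n | ∑ j, y j ≤ 1} := by
        rw [stdSimp_eq]; exact fun y hy => hy.2
      have := interior_mono hsub hx
      rwa [interior_halfspace_sum hn] at this
  · have hopen : IsOpen {x : Euc n | (∀ j, 0 < x j) ∧ ∑ j, x j < 1} := by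
      have h1 : IsOpen {x : Euc n | ∀ j, 0 < x j} := by
        have : {x : Euc n | ∀ j, 0 < x j}
            = ⋂ j : Fin n, (EuclideanSpace.proj (𝕜 := ℝ) j) ⁻¹' (Set.Ioi (0:ℝ)) := by
          ext x; simp [Set.mem_iInter]
        rw [this]
        exact isOpen_iInter_of_finite fun j =>
          isOpen_Ioi.preimage (EuclideanSpace.proj (𝕜 := ℝ) j).continuous
      have h2 : IsOpen {x : Euc n | ∑ j, x j < 1} := by
        have : {x : Euc n | ∑ j, x j < 1} = (sumCLM n) ⁻¹' (Set.Iio (1:ℝ)) := by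
          ext y; simp [sumCLM_apply]
        rw [this]
        exact isOpen_Iio.preimage (sumCLM n).continuous
      exact h1.inter h2
    have hsub : {x : Euc n | (∀ j, 0 < x j) ∧ ∑ j, x j < 1} ⊆ stdSimp n := by
      rw [stdSimp_eq]; exact fun x hx => ⟨fun j => (hx.1 j).le, hx.2.le⟩
    exact interior_maximal hsub hopen

lemma mem_interior_stdSimp_iff (hn : 0 < n) {x : Euc n} :
    x ∈ interior (stdSimp n) ↔ (∀ j, 0 < x j) ∧ ∑ j, x j < 1 := by
  rw [interior_stdSimp hn]; rfl

lemma stdSimp_coord_nonneg {x : Euc n} (hx : x ∈ stdSimp n) (j : Fin n) : 0 ≤ x j := by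
  rw [stdSimp_eq] at hx; exact hx.1 j

lemma stdSimp_sum_le {x : Euc n} (hx : x ∈ stdSimp n) : ∑ j, x j ≤ 1 := by
  rw [stdSimp_eq] at hx; exact hx.2

lemma stdSimp_coord_le_one {x : Euc n} (hx : x ∈ stdSimp n) (j : Fin n) : x j ≤ 1 := by
  refine le_trans ?_ (stdSimp_sum_le hx)
  exact Finset.single_le_sum (fun k _ => stdSimp_coord_nonneg hx k) (Finset.mem_univ j)

lemma sFacet_castSucc (j : Fin n) :
    sFacet n (Fin.castSucc j) = stdSimp n ∩ {x | x j = 0} := by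
  have h : ((Fin.castSucc j : Fin (n+1)) : ℕ) < n := by simpa using j.isLt
  rw [sFacet, dif_pos h]
  congr

lemma sFacet_last : sFacet n (Fin.last n) = stdSimp n ∩ {x | ∑ j, x j = 1} := by
  rw [sFacet, dif_neg]
  simp

lemma sNormal_castSucc (j : Fin n) : sNormal n (Fin.castSucc j) = Pi.single j 1 := by
  have h : ((Fin.castSucc j : Fin (n+1)) : ℕ) < n := by simpa using j.isLt
  rw [sNormal, dif_pos h]
  congr

lemma sNormal_last : sNormal n (Fin.last n) = fun _ => 1 := by
  rw [sNormal, dif_neg]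
  simp

lemma exists_facet (hn : 0 < n) {q : Euc n} (hq : q ∈ stdSimp n)
    (hq' : q ∉ interior (stdSimp n)) : ∃ j : Fin (n+1), q ∈ sFacet n j := by
  rw [mem_interior_stdSimp_iff hn] at hq'
  push_neg at hq'
  by_cases h : ∀ j, 0 < q j
  · exact ⟨Fin.last n, by rw [sFacet_last]; exact ⟨hq, le_antisymm (stdSimp_sum_le hq) (hq' h)⟩⟩
  · push_neg at h
    obtain ⟨j, hj⟩ := h
    exact ⟨Fin.castSucc j, by
      rw [sFacet_castSucc]
      exact ⟨hq, le_antisymm hj (stdSimp_coord_nonneg hq j)⟩⟩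

lemma facet_inter_interior (hn : 0 < n) (j : Fin (n+1)) :
    sFacet n j ∩ interior (stdSimp n) = ∅ := by
  rw [Set.eq_empty_iff_forall_notMem]
  rintro x ⟨hx1, hx2⟩
  rw [mem_interior_stdSimp_iff hn] at hx2
  rw [sFacet] at hx1
  by_cases h : (j : ℕ) < n
  · rw [dif_pos h] at hx1
    exact absurd hx1.2 (ne_of_gt (hx2.1 ⟨j, h⟩))
  · rw [dif_neg h] at hx1
    exact absurd hx1.2 (ne_of_lt hx2.2)

lemma mem_sSkel {a b : Fin (n+1)} (hab : a ≠ b) {q : Euc n}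
    (ha : q ∈ sFacet n a) (hb : q ∈ sFacet n b) : q ∈ sSkel n := by
  rw [sSkel]
  exact Set.mem_iUnion.2 ⟨a, Set.mem_iUnion.2 ⟨b, Set.mem_iUnion.2 ⟨hab, ha, hb⟩⟩⟩

lemma closure_interior_stdSimp_subset : closure (interior (stdSimp n)) ⊆ stdSimp n :=
  closure_minimal interior_subset isClosed_stdSimp

end Simplex2
-- Part C: structure of unbounded edges
section Ray

variable {n : ℕ}

lemma euc_exists_coord_ne {u : Euc n} (hu : u ≠ 0) : ∃ j, u j ≠ 0 := by
  by_contra h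
  push_neg at h
  exact hu (PiLp.ext h)

lemma euc_add_smul_apply (v u : Euc n) (t : ℝ) (j : Fin n) :
    (v + t • u) j = v j + t * u j := rfl

lemma mem_segment_line {v u : Euc n} {t t' : ℝ} (ht0 : 0 ≤ t) (htt : t ≤ t') :
    v + t • u ∈ segment ℝ v (v + t' • u) := by
  rcases eq_or_lt_of_le (ht0.trans htt) with h | h
  · have ht : t = 0 := le_antisymm (h ▸ htt) ht0
    rw [ht, zero_smul, add_zero]
    exact left_mem_segment ℝ v _
  · have ht' : t' ≠ 0 := ne_of_gt h
    refine ⟨1 - t/t', t/t', by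
        have : t/t' ≤ 1 := (div_le_one h).2 htt
        linarith, by positivity, by ring, ?_⟩
    have key : (1 - t/t') • v + (t/t') • (v + t' • u) = v + ((t/t') * t') • u := by
      rw [smul_add, smul_smul]
      module
    rw [key, div_mul_cancel₀ _ ht']

lemma ray_struct (hn : 0 < n) {v u : Euc n} (hu : u ≠ 0) {T : ℝ≥0∞} (hT : 0 < T)
    (hv : v ∈ interior (stdSimp n))
    (hcl : ¬ closure (rayTo v u T ∩ interior (stdSimp n)) ⊆ interior (stdSimp n)) :
    ∃ s : ℝ, 0 < s ∧
      rayTo v u T ∩ interior (stdSimp n) = (fun t : ℝ => v + t • u) '' Set.Ico 0 s ∧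
      closure (rayTo v u T ∩ interior (stdSimp n)) = segment ℝ v (v + s • u) ∧
      v + s • u ∉ interior (stdSimp n) ∧ v + s • u ∈ stdSimp n := by
  set U := interior (stdSimp n) with hU
  have hUopen : IsOpen U := isOpen_interior
  have hUconv : Convex ℝ U := convex_interior_stdSimp
  set γ : ℝ → Euc n := fun t => v + t • u with hγ
  have hγcont : Continuous γ := continuous_const.add (continuous_id.smul continuous_const)
  set I : Set ℝ := {t | 0 ≤ t ∧ ENNReal.ofReal t < T ∧ γ t ∈ U} with hI
  have h0I : (0:ℝ) ∈ I := by
    refine ⟨le_refl 0, by simpa using hT, ?_⟩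
    show v + (0:ℝ) • u ∈ U
    rw [zero_smul, add_zero]
    exact hv
  have hIne : I.Nonempty := ⟨0, h0I⟩
  obtain ⟨j, hj⟩ := euc_exists_coord_ne hu
  have hbdd : BddAbove I := by
    refine ⟨1 / |u j|, fun t ht => ?_⟩
    have htU : γ t ∈ U := ht.2.2
    have h1 : γ t ∈ stdSimp n := interior_subset htU
    have h2 : v ∈ stdSimp n := interior_subset hv
    have e1 : (γ t) j = v j + t * u j := rfl
    have b1 : 0 ≤ (γ t) j := stdSimp_coord_nonneg h1 j
    have b2 : (γ t) j ≤ 1 := stdSimp_coord_le_one h1 j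
    have b3 : 0 ≤ v j := stdSimp_coord_nonneg h2 j
    have b4 : v j ≤ 1 := stdSimp_coord_le_one h2 j
    have habs : |t * u j| ≤ 1 := by
      rw [abs_le]
      constructor <;> [linarith [e1 ▸ b1, e1 ▸ b2]; linarith [e1 ▸ b1, e1 ▸ b2]]
    have : |t| * |u j| ≤ 1 := by rwa [← abs_mul]
    rw [abs_of_nonneg ht.1] at this
    rw [le_div_iff₀ (abs_pos.2 hj)]
    linarith
  set s := sSup I with hs
  have hO : IsOpen {t : ℝ | ENNReal.ofReal t < T ∧ γ t ∈ U} := by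
    have h1 : IsOpen {t : ℝ | ENNReal.ofReal t < T} :=
      isOpen_Iio.preimage ENNReal.continuous_ofReal
    exact h1.inter (hUopen.preimage hγcont)
  have hs_pos : 0 < s := by
    obtain ⟨ε, hε, hball⟩ := Metric.isOpen_iff.1 hO 0 ⟨by simpa using hT, h0I.2.2⟩
    have hmem : ε/2 ∈ I := by
      have : (ε/2 : ℝ) ∈ Metric.ball (0:ℝ) ε := by
        rw [Metric.mem_ball, Real.dist_eq, sub_zero, abs_of_nonneg (half_pos hε).le]
        linarith
      have := hball this
      exact ⟨by positivity, this.1, this.2⟩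
    calc (0:ℝ) < ε/2 := half_pos hε
      _ ≤ s := le_csSup hbdd hmem
  have hint : ∀ t t' : ℝ, t' ∈ I → 0 ≤ t → t ≤ t' → t ∈ I := by
    intro t t' ht' ht0 htt
    refine ⟨ht0, lt_of_le_of_lt (ENNReal.ofReal_le_ofReal htt) ht'.2.1, ?_⟩
    exact hUconv.segment_subset hv ht'.2.2 (mem_segment_line ht0 htt)
  have hsnotI : s ∉ I := by
    intro hsI
    obtain ⟨ε, hε, hball⟩ := Metric.isOpen_iff.1 hO s ⟨hsI.2.1, hsI.2.2⟩
    have hmem : s + ε/2 ∈ I := by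
      have hb : (s + ε/2 : ℝ) ∈ Metric.ball s ε := by
        rw [Metric.mem_ball, Real.dist_eq, add_sub_cancel_left, abs_of_nonneg (half_pos hε).le]
        linarith
      have := hball hb
      exact ⟨by positivity, this.1, this.2⟩
    have := le_csSup hbdd hmem
    linarith
  have hIeq : I = Set.Ico 0 s := by
    apply Set.Subset.antisymm
    · intro t ht
      refine ⟨ht.1, lt_of_le_of_ne (le_csSup hbdd ht) ?_⟩
      rintro rfl
      exact hsnotI ht
    · rintro t ⟨ht0, hts⟩
      obtain ⟨t', ht'I, htt'⟩ := exists_lt_of_lt_csSup hIne hts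
      exact hint t t' ht'I ht0 htt'.le
  have hcar : rayTo v u T ∩ U = γ '' I := by
    ext x
    constructor
    · rintro ⟨⟨t, h1, h2, rfl⟩, hxU⟩
      exact ⟨t, ⟨h1, h2, hxU⟩, rfl⟩
    · rintro ⟨t, ⟨h1, h2, h3⟩, rfl⟩
      exact ⟨⟨t, h1, h2, rfl⟩, h3⟩
  set q := v + s • u with hq
  have hseg : γ '' Set.Icc 0 s = segment ℝ v q := by
    have hqv : q - v = s • u := by rw [hq]; abel
    rw [segment_eq_image', hqv]
    ext x
    constructor
    · rintro ⟨t, ⟨ht0, hts⟩, rfl⟩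
      refine ⟨t/s, ⟨by positivity, (div_le_one hs_pos).2 hts⟩, ?_⟩
      show v + (t/s) • (s • u) = γ t
      rw [smul_smul, div_mul_cancel₀ _ (ne_of_gt hs_pos)]
    · rintro ⟨θ, ⟨h0, h1⟩, rfl⟩
      refine ⟨θ * s, ⟨by positivity, by nlinarith⟩, ?_⟩
      show γ (θ * s) = v + θ • (s • u)
      rw [smul_smul]
  have hclosed_seg : IsClosed (segment ℝ v q) := by
    rw [← hseg]
    exact (isCompact_Icc.image hγcont).isClosed
  have hclosure : closure (rayTo v u T ∩ U) = segment ℝ v q := by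
    rw [hcar, hIeq]
    apply Set.Subset.antisymm
    · refine closure_minimal ?_ hclosed_seg
      rw [← hseg]
      exact Set.image_mono Set.Ico_subset_Icc_self
    · rw [← hseg, ← closure_Ico (ne_of_lt hs_pos)]
      exact image_closure_subset_closure_image hγcont
  have hmemU : ∀ t : ℝ, 0 ≤ t → t < s → γ t ∈ U := by
    intro t h1 h2
    have : t ∈ I := by rw [hIeq]; exact ⟨h1, h2⟩
    exact this.2.2
  have hqU : q ∉ U := by
    intro hqU
    by_cases hsT : ENNReal.ofReal s < T
    · exact hsnotI ⟨hs_pos.le, hsT, hqU⟩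
    · apply hcl
      rw [hU, hclosure, ← hseg]
      rintro x ⟨t, ⟨ht0, hts⟩, rfl⟩
      rcases eq_or_lt_of_le hts with rfl | h
      · exact hqU
      · exact hmemU t ht0 h
  have hqK : q ∈ stdSimp n := by
    have h1 : q ∈ closure (rayTo v u T ∩ U) := by
      rw [hclosure]; exact right_mem_segment ℝ v q
    have h2 : closure (rayTo v u T ∩ U) ⊆ closure U :=
      closure_mono Set.inter_subset_right
    exact closure_interior_stdSimp_subset (h2 h1)
  exact ⟨s, hs_pos, by rw [hcar, hIeq], hclosure, hqU, hqK⟩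

end Ray
-- Part D: edge analysis
section EdgeAnalysis

variable {n : ℕ}

lemma fin_eq_last_of_not_lt {j : Fin (n+1)} (h : ¬ (j:ℕ) < n) : j = Fin.last n :=
  Fin.ext (le_antisymm (Nat.lt_succ_iff.1 j.isLt) (not_lt.1 h))

lemma sFacet_lt {j : Fin (n+1)} (h : (j:ℕ) < n) :
    sFacet n j = stdSimp n ∩ {x | x ⟨j, h⟩ = 0} := by rw [sFacet, dif_pos h]

lemma sNormal_lt {j : Fin (n+1)} (h : (j:ℕ) < n) :
    sNormal n j = Pi.single ⟨j, h⟩ 1 := by rw [sNormal, dif_pos h]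

lemma sFacet_not_lt {j : Fin (n+1)} (h : ¬ (j:ℕ) < n) :
    sFacet n j = stdSimp n ∩ {x | ∑ m, x m = 1} := by rw [sFacet, dif_neg h]

lemma sNormal_not_lt {j : Fin (n+1)} (h : ¬ (j:ℕ) < n) :
    sNormal n j = fun _ => 1 := by rw [sNormal, dif_neg h]

lemma mult_of_normal_lt {e : TropEdge n} {k : ℤ} {j : Fin n}
    (hk : e.weight = k • (Pi.single j 1 : Fin n → ℤ)) : e.mult = k.natAbs := by
  have hcomp : ∀ m, (e.weight m).natAbs = if m = j then k.natAbs else 0 := by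
    intro m
    rw [hk]
    by_cases h : m = j <;> simp [h, Pi.single_apply]
  apply Nat.dvd_antisymm
  · have h := Finset.gcd_dvd (f := fun m => (e.weight m).natAbs) (Finset.mem_univ j)
    have h' : e.mult ∣ (e.weight j).natAbs := h
    rw [hcomp j, if_pos rfl] at h'
    exact h'
  · apply Finset.dvd_gcd
    intro m _
    rw [hcomp m]
    by_cases h : m = j
    · rw [if_pos h]
    · rw [if_neg h]; exact dvd_zero _

lemma mult_of_normal_last (hn : 0 < n) {e : TropEdge n} {k : ℤ}
    (hk : e.weight = k • ((fun _ => 1) : Fin n → ℤ)) : e.mult = k.natAbs := by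
  have hcomp : ∀ m, (e.weight m).natAbs = k.natAbs := by
    intro m; rw [hk]; simp
  apply Nat.dvd_antisymm
  · have h := Finset.gcd_dvd (f := fun m => (e.weight m).natAbs)
      (Finset.mem_univ (⟨0, hn⟩ : Fin n))
    have h' : e.mult ∣ (e.weight ⟨0, hn⟩).natAbs := h
    rwa [hcomp] at h'
  · exact Finset.dvd_gcd fun m _ => by rw [hcomp]

lemma int_eq_neg_natAbs {m : ℤ} (h : (m:ℝ) < 0) : m = -(m.natAbs : ℤ) := by
  have : m < 0 := by exact_mod_cast h
  omega

lemma int_eq_natAbs {m : ℤ} (h : 0 < (m:ℝ)) : m = (m.natAbs : ℤ) := by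
  have : 0 < m := by exact_mod_cast h
  omega

lemma combo_bounds {A B a b : ℝ} (ha : 0 ≤ a) (hb : 0 ≤ b) (hab : a + b = 1) :
    min A B ≤ a * A + b * B ∧ a * A + b * B ≤ max A B := by
  have ha' : a = 1 - b := by linarith
  subst ha'
  constructor
  · rcases le_total A B with h | h
    · rw [min_eq_left h]; nlinarith [mul_nonneg hb (sub_nonneg.2 h)]
    · rw [min_eq_right h]; nlinarith [mul_nonneg (by linarith : (0:ℝ) ≤ 1 - b) (sub_nonneg.2 h)]
  · rcases le_total A B with h | h
    · rw [max_eq_right h]; nlinarith [mul_nonneg (by linarith : (0:ℝ) ≤ 1 - b) (sub_nonneg.2 h)]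
    · rw [max_eq_left h]; nlinarith [mul_nonneg hb (sub_nonneg.2 h)]

lemma seg_coord_mem {a b x : Euc n} (hx : x ∈ segment ℝ a b) (i : Fin n) :
    min (a i) (b i) ≤ x i ∧ x i ≤ max (a i) (b i) := by
  obtain ⟨α, β, hα, hβ, hαβ, rfl⟩ := hx
  have hxi : (α • a + β • b) i = α * a i + β * b i := rfl
  rw [hxi]
  exact combo_bounds hα hβ hαβ

lemma cross_segment {a b : Euc n} {i : Fin n} {ζ : ℝ} (ha : a i ≠ ζ) (hb : b i ≠ ζ) :
    ((∃ x ∈ segment ℝ a b, x i < ζ) ∧ (∃ x ∈ segment ℝ a b, ζ < x i)) ↔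
      ((a i < ζ ∧ ζ < b i) ∨ (b i < ζ ∧ ζ < a i)) := by
  constructor
  · rintro ⟨⟨x, hx, hxlt⟩, ⟨y, hy, hygt⟩⟩
    have h1 := (seg_coord_mem hx i).1
    have h2 := (seg_coord_mem hy i).2
    have hmin : min (a i) (b i) < ζ := lt_of_le_of_lt h1 hxlt
    have hmax : ζ < max (a i) (b i) := lt_of_lt_of_le hygt h2
    rcases lt_or_gt_of_ne ha with h | h <;> rcases lt_or_gt_of_ne hb with h' | h'
    · exact absurd hmax (not_lt.2 (max_lt h h').le)
    · left; exact ⟨h, h'⟩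
    · right; exact ⟨h', h⟩
    · exact absurd hmin (not_lt.2 (lt_min h h').le)
  · rintro (⟨h1, h2⟩ | ⟨h1, h2⟩)
    · exact ⟨⟨a, left_mem_segment ℝ a b, h1⟩, ⟨b, right_mem_segment ℝ a b, h2⟩⟩
    · exact ⟨⟨b, right_mem_segment ℝ a b, h1⟩, ⟨a, left_mem_segment ℝ a b, h2⟩⟩

lemma cross_ray {v u : Euc n} {s : ℝ} (hs : 0 < s) {i : Fin n} {ζ : ℝ}
    (hv : v i ≠ ζ) (hq : (v + s • u) i ≠ ζ) :
    ((∃ x ∈ (fun t : ℝ => v + t • u) '' Set.Ico 0 s, x i < ζ) ∧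
     (∃ x ∈ (fun t : ℝ => v + t • u) '' Set.Ico 0 s, ζ < x i)) ↔
      ((v i < ζ ∧ ζ < (v + s • u) i) ∨ ((v + s • u) i < ζ ∧ ζ < v i)) := by
  have hqi : (v + s • u) i = v i + s * u i := rfl
  constructor
  · rintro ⟨⟨x, ⟨t, ⟨ht0, hts⟩, rfl⟩, hxlt⟩, ⟨y, ⟨r, ⟨hr0, hrs⟩, rfl⟩, hygt⟩⟩
    have hxlt' : v i + t * u i < ζ := hxlt
    have hygt' : ζ < v i + r * u i := hygt
    have bound : ∀ w : ℝ, 0 ≤ w → w ≤ s →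
        min (v i) ((v + s • u) i) ≤ v i + w * u i ∧
        v i + w * u i ≤ max (v i) ((v + s • u) i) := by
      intro w h0 h1
      have hs0 : s ≠ 0 := ne_of_gt hs
      have key : (1 - w/s) * v i + (w/s) * ((v + s • u) i) = v i + w * u i := by
        rw [hqi]; field_simp; ring
      rw [← key]
      exact combo_bounds (by
          have : w/s ≤ 1 := (div_le_one hs).2 h1
          linarith) (by positivity) (by ring)
    have hmin : min (v i) ((v + s • u) i) < ζ := lt_of_le_of_lt (bound t ht0 hts.le).1 hxlt'
    have hmax : ζ < max (v i) ((v + s • u) i) := lt_of_lt_of_le hygt' (bound r hr0 hrs.le).2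
    rcases lt_or_gt_of_ne hv with h | h <;> rcases lt_or_gt_of_ne hq with h' | h'
    · exact absurd hmax (not_lt.2 (max_lt h h').le)
    · left; exact ⟨h, h'⟩
    · right; exact ⟨h', h⟩
    · exact absurd hmin (not_lt.2 (lt_min h h').le)
  · rintro (⟨h1, h2⟩ | ⟨h1, h2⟩)
    · have hui : 0 < u i := by rw [hqi] at h2; nlinarith
      refine ⟨⟨v + (0:ℝ) • u, ⟨0, ⟨le_refl 0, hs⟩, rfl⟩, ?_⟩, ?_⟩
      · rw [show (v + (0:ℝ) • u) i = v i + 0 * u i from rfl]; linarith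
      · set mval := (ζ + (v + s • u) i)/2 with hmval
        have hm1 : ζ < mval := by rw [hmval]; linarith
        have hm2 : mval < (v + s • u) i := by rw [hmval]; linarith
        set t := (mval - v i)/(u i) with ht
        have ht0 : 0 ≤ t := by
          apply div_nonneg _ hui.le
          linarith
        have hts : t < s := by
          rw [ht, div_lt_iff₀ hui]
          rw [hqi] at hm2
          linarith
        refine ⟨v + t • u, ⟨t, ⟨ht0, hts⟩, rfl⟩, ?_⟩
        rw [show (v + t • u) i = v i + t * u i from rfl, ht,
          div_mul_cancel₀ _ (ne_of_gt hui)]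
        linarith
    · have hui : u i < 0 := by rw [hqi] at h1; nlinarith
      refine ⟨?_, ⟨v + (0:ℝ) • u, ⟨0, ⟨le_refl 0, hs⟩, rfl⟩, ?_⟩⟩
      · set mval := (ζ + (v + s • u) i)/2 with hmval
        have hm1 : mval < ζ := by rw [hmval]; linarith
        have hm2 : (v + s • u) i < mval := by rw [hmval]; linarith
        set t := (mval - v i)/(u i) with ht
        have ht0 : 0 ≤ t := by
          rw [ht, le_div_iff_of_neg hui]
          simp
          linarith
        have hts : t < s := by
          rw [ht, div_lt_iff_of_neg hui]
          rw [hqi] at hm2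
          linarith
        refine ⟨v + t • u, ⟨t, ⟨ht0, hts⟩, rfl⟩, ?_⟩
        rw [show (v + t • u) i = v i + t * u i from rfl, ht,
          div_mul_cancel₀ _ (ne_of_lt hui)]
        linarith
      · rw [show (v + (0:ℝ) • u) i = v i + 0 * u i from rfl]; linarith

lemma eps_seg {e : TropEdge n} {a b : Euc n} {c : ℝ} (hwr : e.wR ≠ 0)
    (hba : b - a = c • e.wR) {ε : ℤ} {δ : ℝ} (hδ : 0 < δ)
    (hmem : ∀ t : ℝ, 0 < t → t < δ → a + (t * (ε:ℝ)) • e.wR ∈ segment ℝ a b)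
    (hε : ε = 1 ∨ ε = -1) :
    ∃ lam : ℝ, 0 < lam ∧ (ε:ℝ) = lam * c := by
  obtain ⟨α, β, hα, hβ, hαβ, hx⟩ := hmem (δ/2) (half_pos hδ) (by linarith)
  have hco : α • a + β • b = a + β • (b - a) := by
    have hα' : α = 1 - β := by linarith
    rw [hα']
    module
  rw [hco, hba, smul_smul] at hx
  have hx' : (β * c) • e.wR = ((δ/2) * (ε:ℝ)) • e.wR := by
    exact add_right_injective a hx
  have hsc : β * c = δ/2 * (ε:ℝ) := smul_left_injective ℝ hwr hx'
  have hε0 : (ε:ℝ) ≠ 0 := by rcases hε with rfl | rfl <;> norm_num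
  have hβ0 : β ≠ 0 := by
    intro h0
    rw [h0, zero_mul] at hsc
    exact mul_ne_zero (ne_of_gt (half_pos hδ)) hε0 hsc.symm
  have hβpos : 0 < β := lt_of_le_of_ne hβ (Ne.symm hβ0)
  refine ⟨β / (δ/2), by positivity, ?_⟩
  field_simp
  linarith [hsc]

lemma eps_ray {e : TropEdge n} {v u : Euc n} {c : ℝ} {s : ℝ} (hwr : e.wR ≠ 0)
    (hu : u = c • e.wR) {ε : ℤ} {δ : ℝ} (hδ : 0 < δ)
    (hmem : ∀ t : ℝ, 0 < t → t < δ →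
      v + (t * (ε:ℝ)) • e.wR ∈ (fun t : ℝ => v + t • u) '' Set.Ico 0 s)
    (hε : ε = 1 ∨ ε = -1) :
    ∃ lam : ℝ, 0 < lam ∧ (ε:ℝ) = lam * c := by
  obtain ⟨t', ⟨ht0', _⟩, hx⟩ := hmem (δ/2) (half_pos hδ) (by linarith)
  rw [hu] at hx
  have hx2 : v + (t' * c) • e.wR = v + ((δ/2) * (ε:ℝ)) • e.wR := by
    rw [← smul_smul]; exact hx
  have hx' : (t' * c) • e.wR = ((δ/2) * (ε:ℝ)) • e.wR := add_right_injective v hx2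
  have hsc : t' * c = δ/2 * (ε:ℝ) := smul_left_injective ℝ hwr hx'
  have hε0 : (ε:ℝ) ≠ 0 := by rcases hε with rfl | rfl <;> norm_num
  have ht0 : t' ≠ 0 := by
    intro h0
    rw [h0, zero_mul] at hsc
    exact mul_ne_zero (ne_of_gt (half_pos hδ)) hε0 hsc.symm
  have htpos : 0 < t' := lt_of_le_of_ne ht0' (Ne.symm ht0)
  refine ⟨t' / (δ/2), by positivity, ?_⟩
  field_simp
  linarith [hsc]

end EdgeAnalysis
-- Part E: edge classification for saturated curves
section EdgeCases

variable {n : ℕ}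

lemma isClosed_segment_euc (a b : Euc n) : IsClosed (segment ℝ a b) := by
  rw [segment_eq_image']
  exact (isCompact_Icc.image
    (continuous_const.add (continuous_id.smul continuous_const))).isClosed

lemma edge_cases (hn : 0 < n) (G : TropicalCurve n (interior (stdSimp n))) (hG : Saturated G)
    {e : TropEdge n} (he : e ∈ G.edges) :
    (∃ a ∈ G.verts, ∃ b ∈ G.verts, a ≠ b ∧ e.ends = {a, b} ∧
      e.carrier = segment ℝ a b ∧
      (∃ c : ℝ, c ≠ 0 ∧ b - a = c • e.wR) ∧
      closure e.carrier = segment ℝ a b ∧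
      (∀ j : Fin (n+1), closure e.carrier ∩ sFacet n j = ∅)) ∨
    (∃ v ∈ G.verts, ∃ u : Euc n, ∃ s : ℝ, 0 < s ∧ ∃ j : Fin (n+1), ∃ k : ℤ,
      e.ends = {v} ∧
      e.carrier = (fun t : ℝ => v + t • u) '' Set.Ico 0 s ∧
      closure e.carrier = segment ℝ v (v + s • u) ∧
      v + s • u ∈ sFacet n j ∧
      (∀ j' : Fin (n+1), ∀ p ∈ closure e.carrier ∩ sFacet n j', p = v + s • u ∧ j' = j) ∧
      k ≠ 0 ∧ e.weight = k • sNormal n j ∧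
      (∃ c : ℝ, c ≠ 0 ∧ u = c • e.wR)) := by
  have hwne : e.weight ≠ 0 := G.weight_ne e he
  rcases G.edge_shape e he with ⟨a, ha, b, hb, hab, hends, hcarr, hsub, c, hc, hba⟩ |
    ⟨v, hv, u, hu, T, hT, hends, hcarr, hncl, c, hc, hcu⟩
  · left
    have hclos : closure e.carrier = segment ℝ a b := by
      rw [hcarr]
      exact (isClosed_segment_euc a b).closure_eq
    refine ⟨a, ha, b, hb, hab, hends, hcarr, ⟨c, hc, hba⟩, hclos, ?_⟩
    intro j
    rw [hclos, Set.eq_empty_iff_forall_notMem]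
    rintro x ⟨hx1, hx2⟩
    have hxU : x ∈ interior (stdSimp n) := hsub hx1
    have := facet_inter_interior hn j
    rw [Set.eq_empty_iff_forall_notMem] at this
    exact this x ⟨hx2, hxU⟩
  · right
    obtain ⟨s, hs, hcar', hclr, hqnotU, hqK⟩ :=
      ray_struct hn hu hT (G.verts_mem v hv) hncl
    set q := v + s • u with hqdef
    have hclos : closure e.carrier = segment ℝ v q := by rw [hcarr]; exact hclr
    have hcarr2 : e.carrier = (fun t : ℝ => v + t • u) '' Set.Ico 0 s := by
      rw [hcarr]; exact hcar'
    have hqcl : q ∈ closure e.carrier := by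
      rw [hclos]; exact right_mem_segment ℝ v q
    have hsupp : closure e.carrier ⊆ closure G.support := by
      apply closure_mono
      exact Set.subset_biUnion_of_mem (u := fun e => e.carrier) he
    have hqsk : q ∉ sSkel n := by
      intro hsk
      have h1 := hG.1
      rw [Set.eq_empty_iff_forall_notMem] at h1
      exact h1 q ⟨hsupp hqcl, hsk⟩
    obtain ⟨j, hj⟩ := exists_facet hn hqK hqnotU
    have huniq : ∀ j' : Fin (n+1), ∀ p ∈ closure e.carrier ∩ sFacet n j',
        p = q ∧ j' = j := by
      rintro j' p ⟨hp1, hp2⟩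
      rw [hclos, segment_eq_image'] at hp1
      obtain ⟨θ, ⟨hθ0, hθ1⟩, rfl⟩ := hp1
      have hqv : q - v = s • u := by rw [hqdef]; abel
      rcases lt_or_eq_of_le hθ1 with hθ | hθ
      · exfalso
        have hmem : v + θ • (q - v) ∈ e.carrier := by
          rw [hcarr2, hqv, smul_smul]
          exact ⟨θ * s, ⟨by positivity, by nlinarith⟩, rfl⟩
        have hU : v + θ • (q - v) ∈ interior (stdSimp n) := by
          have : e.carrier ⊆ interior (stdSimp n) := by
            rw [hcarr]; exact Set.inter_subset_right
          exact this hmem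
        have hdisj := facet_inter_interior hn j'
        rw [Set.eq_empty_iff_forall_notMem] at hdisj
        exact hdisj _ ⟨hp2, hU⟩
      · have hpq : v + θ • (q - v) = q := by rw [hθ, one_smul]; abel
        refine ⟨hpq, ?_⟩
        by_contra hjj
        exact hqsk (mem_sSkel hjj (hpq ▸ hp2) hj)
    obtain ⟨k, hk⟩ := hG.2 e he j ⟨q, hqcl, hj⟩
    have hk0 : k ≠ 0 := by
      intro h0
      rw [h0, zero_smul] at hk
      exact hwne hk
    exact ⟨v, hv, u, s, hs, j, k, hends, hcarr2, hclos, hj, huniq, hk0, hk, c, hc, hcu⟩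

end EdgeCases
-- Part F: edges at the far facet
section FarFacet

variable {n : ℕ}

lemma sFacet_subset_stdSimp (j : Fin (n+1)) : sFacet n j ⊆ stdSimp n := by
  rw [sFacet]
  split_ifs <;> exact Set.inter_subset_left

lemma last_not_lt : ¬ ((Fin.last n : Fin (n+1)) : ℕ) < n := by simp

lemma sum_facet_last {q : Euc n} (hq : q ∈ sFacet n (Fin.last n)) : ∑ j, q j = 1 := by
  rw [sFacet_not_lt last_not_lt] at hq
  exact hq.2

lemma dir_pos (hn : 0 < n) {v : Euc n} (hv : v ∈ interior (stdSimp n)) {u : Euc n}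
    {s : ℝ} (hs : 0 < s) (hq : v + s • u ∈ sFacet n (Fin.last n)) {c : ℝ} {kk : ℤ}
    (hum : ∀ mm, u mm = c * (kk:ℝ)) : 0 < c * (kk:ℝ) := by
  have hsum_q : ∑ j, (v + s • u) j = 1 := sum_facet_last hq
  have hsum_v : ∑ j, v j < 1 := ((mem_interior_stdSimp_iff hn).1 hv).2
  have hsplit : ∑ j, (v + s • u) j = ∑ j, v j + s * ∑ j, u j := by
    rw [Finset.mul_sum, ← Finset.sum_add_distrib]
    rfl
  have hsum_u : ∑ j, u j = (n : ℝ) * (c * (kk:ℝ)) := by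
    rw [Finset.sum_congr rfl fun j _ => hum j]
    rw [Finset.sum_const, Finset.card_univ, Fintype.card_fin, nsmul_eq_mul]
  by_contra h
  push_neg at h
  have h1 : (n : ℝ) * (c * (kk:ℝ)) ≤ 0 :=
    mul_nonpos_of_nonneg_of_nonpos (Nat.cast_nonneg n) h
  have h2 : s * ((n : ℝ) * (c * (kk:ℝ))) ≤ 0 :=
    mul_nonpos_of_nonneg_of_nonpos hs.le h1
  rw [hsplit, hsum_u] at hsum_q
  linarith

/-- the all-ones real vector -/
lemma tail_lemma (hn : 0 < n) (G : TropicalCurve n (interior (stdSimp n)))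
    (hG : Saturated G) {e : TropEdge n} (he : e ∈ G.edges) {p : Euc n}
    (hp : p ∈ closure e.carrier) (hpf : p ∈ sFacet n (Fin.last n)) :
    ∃ ρ : ℝ, 0 < ρ ∧ ∀ r : ℝ, 0 < r → r ≤ ρ →
      p - r • intVec (fun _ => (1:ℤ)) ∈ e.carrier := by
  rcases edge_cases hn G hG he with
    ⟨a, ha, b, hb, hab, hends, hcarr, ⟨c, hc, hba⟩, hclos, hfac⟩ |
    ⟨v, hv, u, s, hs, j, k, hends, hcarr, hclos, hqfac, huniq, hk0, hk, c, hc, hcu⟩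
  · exfalso
    have := hfac (Fin.last n)
    rw [Set.eq_empty_iff_forall_notMem] at this
    exact this p ⟨hp, hpf⟩
  · obtain ⟨hpq, hjl⟩ := huniq (Fin.last n) p ⟨hp, hpf⟩
    subst hjl
    have hnor : e.weight = k • ((fun _ => 1) : Fin n → ℤ) := by
      rw [hk, sNormal_not_lt last_not_lt]
    have hum : ∀ mm, u mm = c * (k:ℝ) := by
      intro mm
      rw [hcu]
      show c * ((e.weight mm : ℤ) : ℝ) = c * (k:ℝ)
      rw [hnor]
      norm_num
    have hdir : 0 < c * (k:ℝ) := dir_pos hn (G.verts_mem v hv) hs (hpq ▸ hpf) hum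
    set μ := c * (k:ℝ) with hμ
    have hueq : u = μ • intVec (fun _ => (1:ℤ)) := by
      refine PiLp.ext fun mm => ?_
      rw [hum mm]
      show μ = μ * ((1:ℤ):ℝ)
      norm_num
    refine ⟨s * μ, by positivity, ?_⟩
    intro r hr0 hrρ
    rw [hcarr]
    refine ⟨s - r/μ, ⟨?_, ?_⟩, ?_⟩
    · have : r/μ ≤ s := by
        rw [div_le_iff₀ hdir]
        linarith [hrρ]
      linarith
    · have : 0 < r/μ := div_pos hr0 hdir
      linarith
    · show v + (s - r/μ) • u = p - r • intVec (fun _ => (1:ℤ))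
      have h1 : (r/μ) • u = r • intVec (fun _ => (1:ℤ)) := by
        rw [hueq, smul_smul, div_mul_cancel₀ _ (ne_of_gt hdir)]
      have h2 : v + (s - r/μ) • u = (v + s • u) - (r/μ) • u := by
        rw [sub_smul]
        abel
      rw [hpq, h2, h1]

lemma unique_edge (hn : 0 < n) (G : TropicalCurve n (interior (stdSimp n)))
    (hG : Saturated G) {e f : TropEdge n} (he : e ∈ G.edges) (hf : f ∈ G.edges)
    {p : Euc n} (hpe : p ∈ closure e.carrier) (hpf : p ∈ closure f.carrier)
    (hpfacet : p ∈ sFacet n (Fin.last n)) : e = f := by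
  by_contra hef
  obtain ⟨ρe, hρe, hte⟩ := tail_lemma hn G hG he hpe hpfacet
  obtain ⟨ρf, hρf, htf⟩ := tail_lemma hn G hG hf hpf hpfacet
  set ρ := min ρe ρf with hρ
  have hρ0 : 0 < ρ := lt_min hρe hρf
  set φ : ℝ → Euc n := fun r => p - r • intVec (fun _ => (1:ℤ)) with hφ
  have hsub : φ '' Set.Ioc 0 ρ ⊆ (G.verts : Set (Euc n)) := by
    rintro x ⟨r, ⟨hr0, hrρ⟩, rfl⟩
    have h1 : φ r ∈ e.carrier := hte r hr0 (hrρ.trans (min_le_left _ _))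
    have h2 : φ r ∈ f.carrier := htf r hr0 (hrρ.trans (min_le_right _ _))
    exact G.edges_meet e he f hf hef (φ r) ⟨h1, h2⟩
  have hinj : Set.InjOn φ (Set.Ioc 0 ρ) := by
    intro r _ r' _ hrr
    have h0 : (φ r) ⟨0, hn⟩ = (φ r') ⟨0, hn⟩ := by rw [hrr]
    have e1 : (φ r) ⟨0, hn⟩ = p ⟨0, hn⟩ - r * ((1:ℤ):ℝ) := rfl
    have e2 : (φ r') ⟨0, hn⟩ = p ⟨0, hn⟩ - r' * ((1:ℤ):ℝ) := rfl
    rw [e1, e2] at h0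
    norm_num at h0
    exact h0
  have hinf : (φ '' Set.Ioc 0 ρ).Infinite := (Set.Ioc_infinite hρ0).image hinj
  exact hinf (G.verts.finite_toSet.subset hsub)

lemma top_struct (hn : 0 < n) (G : TropicalCurve n (interior (stdSimp n)))
    (hG : Saturated G) {l : ℕ} {z : Fin l → Euc n} {m : Fin l → ℕ}
    (hzinj : Function.Injective z)
    (hzrange : closure G.support ∩ sFacet n (Fin.last n) = Set.range z)
    (hm : ∀ k : Fin l, ∀ e ∈ G.edges, z k ∈ closure e.carrier → m k = e.mult)
    {e : TropEdge n} (he : e ∈ G.edges)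
    (hne : (closure e.carrier ∩ sFacet n (Fin.last n)).Nonempty) :
    ∃ k0 : Fin l, z k0 ∈ closure e.carrier ∧ m k0 = e.mult ∧
      (∀ k' : Fin l, z k' ∈ closure e.carrier → k' = k0) := by
  have hz_facet : ∀ k' : Fin l, z k' ∈ sFacet n (Fin.last n) := by
    intro k'
    have : z k' ∈ Set.range z := ⟨k', rfl⟩
    rw [← hzrange] at this
    exact this.2
  have hsupp : closure e.carrier ⊆ closure G.support :=
    closure_mono (Set.subset_biUnion_of_mem (u := fun e => e.carrier) he)
  rcases edge_cases hn G hG he with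
    ⟨a, ha, b, hb, hab, hends, hcarr, ⟨c, hc, hba⟩, hclos, hfac⟩ |
    ⟨v, hv, u, s, hs, j, k, hends, hcarr, hclos, hqfac, huniq, hk0, hk, c, hc, hcu⟩
  · exfalso
    obtain ⟨p, hp⟩ := hne
    have := hfac (Fin.last n)
    rw [Set.eq_empty_iff_forall_notMem] at this
    exact this p hp
  · obtain ⟨p, hp⟩ := hne
    obtain ⟨hpq, hjl⟩ := huniq (Fin.last n) p hp
    have hqcl : v + s • u ∈ closure e.carrier := by
      rw [hclos]; exact right_mem_segment ℝ _ _
    have hqrange : v + s • u ∈ Set.range z := by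
      rw [← hzrange]
      exact ⟨hsupp hqcl, by rw [← hpq]; exact hp.2⟩
    obtain ⟨k0, hk0q⟩ := hqrange
    refine ⟨k0, by rw [hk0q]; exact hqcl, hm k0 e he (by rw [hk0q]; exact hqcl), ?_⟩
    intro k' hk'
    apply hzinj
    rw [hk0q]
    exact (huniq (Fin.last n) (z k') ⟨hk', hz_facet k'⟩).1

end FarFacet
/-- for a saturated tropical curve of degree d in the interior of the
standard simplex with intersection points z⁽¹⁾, …, z⁽ˡ⁾ (of multiplicities
m⁽¹⁾, …, m⁽ˡ⁾) with the facet in {x₁ + ⋯ + xₙ = 1}, and for a level ζ ∈ (0,1) avoiding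
the i-th coordinates of all vertices and all z⁽ᵏ⁾, the sum of |wₑⁱ| over the edges
crossing the hyperplane {xᵢ = ζ} equals d minus the sum of the multiplicities m⁽ᵏ⁾ with
zᵢ⁽ᵏ⁾ < ζ. -/
theorem density_lemma (n : ℕ) (hn : 2 ≤ n) (d : ℕ) (i : Fin n) (ζ : ℝ)
    (G : TropicalCurve n (interior (stdSimp n))) (hG : Saturated G)
    (hd : ∀ j : Fin (n + 1), facetCount G j = d)
    (l : ℕ) (z : Fin l → Euc n) (m : Fin l → ℕ)
    (hzinj : Function.Injective z)
    (hzrange : closure G.support ∩ sFacet n (Fin.last n) = Set.range z)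
    (hm : ∀ k : Fin l, ∀ e ∈ G.edges, z k ∈ closure e.carrier → m k = e.mult)
    (hζ0 : 0 < ζ) (hζ1 : ζ < 1)
    (hζv : ∀ v ∈ G.verts, v i ≠ ζ)
    (hζz : ∀ k : Fin l, z k i ≠ ζ) :
    (∑ e ∈ G.edges.filter (fun e =>
        (∃ x ∈ e.carrier, x i < ζ) ∧ ∃ x ∈ e.carrier, ζ < x i),
      ((e.weight i).natAbs : ℤ)) =
    (d : ℤ) - ∑ k ∈ Finset.univ.filter (fun k : Fin l => z k i < ζ), (m k : ℤ) := by
  classical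
  have hn0 : 0 < n := by omega
  choose! ε hε using G.balanced
  set F : Euc n → TropEdge n → ℤ :=
    fun v e => if ζ < v i ∧ v ∈ e.ends then ε v e * e.weight i else 0 with hF
  -- basic facts about the points z k
  have hz_facet : ∀ k' : Fin l, z k' ∈ sFacet n (Fin.last n) := by
    intro k'
    have h1 : z k' ∈ Set.range z := ⟨k', rfl⟩
    rw [← hzrange] at h1
    exact h1.2
  have hz_edge : ∀ k' : Fin l, ∃ e ∈ G.edges, z k' ∈ closure e.carrier := by
    intro k'
    have h1 : z k' ∈ Set.range z := ⟨k', rfl⟩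
    rw [← hzrange] at h1
    have h2 : closure G.support = ⋃ e ∈ G.edges, closure e.carrier := by
      have h0 : G.support = ⋃ e ∈ G.edges, e.carrier := rfl
      rw [h0]
      exact Finset.closure_biUnion G.edges _
    have h3 := h1.1
    rw [h2] at h3
    simpa using h3
  have hz_filter : ∀ k' : Fin l, ∃ e0 ∈ G.edges,
      G.edges.filter (fun e => z k' ∈ closure e.carrier) = {e0} := by
    intro k'
    obtain ⟨e0, he0, hze0⟩ := hz_edge k'
    refine ⟨e0, he0, ?_⟩
    ext g
    simp only [Finset.mem_filter, Finset.mem_singleton]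
    constructor
    · rintro ⟨hg, hzg⟩
      exact unique_edge hn0 G hG hg he0 hzg hze0 (hz_facet k')
    · rintro rfl
      exact ⟨he0, hze0⟩
  -- row sums vanish by the balancing condition
  have hrow : ∀ v ∈ G.verts, ∑ e ∈ G.edges, F v e = 0 := by
    intro v hv
    by_cases hvζ : ζ < v i
    · have h1 : ∀ e ∈ G.edges, F v e = if v ∈ e.ends then ε v e * e.weight i else 0 := by
        intro e _
        simp only [hF]
        by_cases h : v ∈ e.ends
        · rw [if_pos ⟨hvζ, h⟩, if_pos h]
        · rw [if_neg (fun hc => h hc.2), if_neg h]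
      rw [Finset.sum_congr rfl h1, ← Finset.sum_filter]
      have h3 := congrFun ((hε v hv).2) i
      simpa [Finset.sum_apply, Pi.smul_apply, smul_eq_mul] using h3
    · exact Finset.sum_eq_zero fun e _ => by
        simp only [hF]; exact if_neg (fun hc => hvζ hc.1)
  have htot : ∑ e ∈ G.edges, ∑ v ∈ G.verts, F v e = 0 := by
    rw [Finset.sum_comm]
    exact Finset.sum_eq_zero hrow
  -- the per-edge contribution identity
  have hedge : ∀ e ∈ G.edges,
      ∑ v ∈ G.verts, F v e =
        (∑ k' ∈ Finset.univ.filter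
            (fun k' : Fin l => ζ < z k' i ∧ z k' ∈ closure e.carrier), (m k' : ℤ)) -
        (if (∃ x ∈ e.carrier, x i < ζ) ∧ (∃ x ∈ e.carrier, ζ < x i)
          then ((e.weight i).natAbs : ℤ) else 0) := by
    intro e he
    have hwR : e.wR ≠ 0 := fun h => G.weight_ne e he (intVec_eq_zero_iff.1 h)
    rcases edge_cases hn0 G hG he with
      ⟨a, ha, b, hb, hab, hends, hcarr, ⟨c, hc, hba⟩, hclos, hfac⟩ |
      ⟨v, hv, u, s, hs, j, kk, hends, hcarr, hclos, hqfac, huniq, hkk0, hkk, c, hc, hcu⟩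
    · -- internal edge
      have haζ := hζv a ha
      have hbζ := hζv b hb
      have hB0 : (∑ k' ∈ Finset.univ.filter
          (fun k' : Fin l => ζ < z k' i ∧ z k' ∈ closure e.carrier), (m k' : ℤ)) = 0 := by
        apply Finset.sum_eq_zero
        intro k' hk'
        rw [Finset.mem_filter] at hk'
        exfalso
        have h1 := hfac (Fin.last n)
        rw [Set.eq_empty_iff_forall_notMem] at h1
        exact h1 (z k') ⟨hk'.2.2, hz_facet k'⟩
      have hsub2 : ({a, b} : Finset (Euc n)) ⊆ G.verts := by
        intro x hx
        rw [Finset.mem_insert, Finset.mem_singleton] at hx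
        rcases hx with rfl | rfl
        · exact ha
        · exact hb
      have hsum : ∑ v ∈ G.verts, F v e = F a e + F b e := by
        rw [← Finset.sum_pair (f := fun w => F w e) hab]
        refine (Finset.sum_subset hsub2 ?_).symm
        intro x _ hnx
        simp only [hF]
        apply if_neg
        rintro ⟨_, hxe⟩
        rw [hends] at hxe
        exact hnx hxe
      rw [hsum, hB0]
      have hae : a ∈ e.ends := by rw [hends]; exact Finset.mem_insert_self a _
      have hbe : b ∈ e.ends := by
        rw [hends]
        exact Finset.mem_insert_of_mem (Finset.mem_singleton_self b)
      obtain ⟨hεa, δa, hδa, hmema⟩ := (hε a ha).1 e he hae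
      obtain ⟨hεb, δb, hδb, hmemb⟩ := (hε b hb).1 e he hbe
      rw [hcarr] at hmema hmemb
      obtain ⟨lama, hlama, hεaeq⟩ := eps_seg hwR hba hδa hmema hεa
      have hmemb' : ∀ t : ℝ, 0 < t → t < δb →
          b + (t * (ε b e : ℝ)) • e.wR ∈ segment ℝ b a := by
        intro t h1 h2
        rw [segment_symm]
        exact hmemb t h1 h2
      have hab' : a - b = (-c) • e.wR := by rw [neg_smul, ← hba]; abel
      obtain ⟨lamb, hlamb, hεbeq⟩ := eps_seg hwR hab' hδb hmemb' hεb
      have hbai : b i - a i = c * ((e.weight i : ℤ) : ℝ) := by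
        have h1 : (b - a) i = b i - a i := rfl
        have h2 : (b - a) i = c * ((e.weight i : ℤ) : ℝ) := by rw [hba]; rfl
        rw [← h1, h2]
      have hcross_iff : ((∃ x ∈ e.carrier, x i < ζ) ∧ (∃ x ∈ e.carrier, ζ < x i)) ↔
          ((a i < ζ ∧ ζ < b i) ∨ (b i < ζ ∧ ζ < a i)) := by
        rw [hcarr]
        exact cross_segment haζ hbζ
      rcases lt_or_gt_of_ne haζ with hai | hai <;> rcases lt_or_gt_of_ne hbζ with hbi | hbi
      · -- both below
        have hFa : F a e = 0 := by
          simp only [hF]; exact if_neg (fun hc' => absurd hc'.1 (not_lt.2 hai.le))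
        have hFb : F b e = 0 := by
          simp only [hF]; exact if_neg (fun hc' => absurd hc'.1 (not_lt.2 hbi.le))
        have hA0 : ¬ ((∃ x ∈ e.carrier, x i < ζ) ∧ (∃ x ∈ e.carrier, ζ < x i)) := by
          rw [hcross_iff]
          rintro (⟨h1, h2⟩ | ⟨h1, h2⟩) <;> linarith
        rw [hFa, hFb, if_neg hA0]
        norm_num
      · -- a below, b above
        have hFa : F a e = 0 := by
          simp only [hF]; exact if_neg (fun hc' => absurd hc'.1 (not_lt.2 hai.le))
        have hFb : F b e = ε b e * e.weight i := by
          simp only [hF]; exact if_pos ⟨hbi, hbe⟩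
        have hreal2 : ((ε b e * e.weight i : ℤ) : ℝ) = lamb * (a i - b i) := by
          push_cast
          rw [hεbeq]
          have h7 : a i - b i = -(c * ((e.weight i : ℤ):ℝ)) := by rw [← hbai]; ring
          rw [h7]
          push_cast
          ring
        have hneg : ((ε b e * e.weight i : ℤ) : ℝ) < 0 := by
          rw [hreal2]
          apply mul_neg_of_pos_of_neg hlamb
          linarith
        have h5 : ε b e * e.weight i = -(((ε b e * e.weight i).natAbs : ℤ)) :=
          int_eq_neg_natAbs hneg
        have h6 : (ε b e * e.weight i).natAbs = (e.weight i).natAbs := by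
          rcases hεb with h | h <;> rw [h] <;> simp
        have hA1 : ((∃ x ∈ e.carrier, x i < ζ) ∧ (∃ x ∈ e.carrier, ζ < x i)) :=
          hcross_iff.2 (Or.inl ⟨hai, hbi⟩)
        rw [hFa, hFb, if_pos hA1, h5, h6]
        ring
      · -- a above, b below
        have hFb : F b e = 0 := by
          simp only [hF]; exact if_neg (fun hc' => absurd hc'.1 (not_lt.2 hbi.le))
        have hFa : F a e = ε a e * e.weight i := by
          simp only [hF]; exact if_pos ⟨hai, hae⟩
        have hreal2 : ((ε a e * e.weight i : ℤ) : ℝ) = lama * (b i - a i) := by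
          push_cast
          rw [hεaeq, hbai]
          ring
        have hneg : ((ε a e * e.weight i : ℤ) : ℝ) < 0 := by
          rw [hreal2]
          apply mul_neg_of_pos_of_neg hlama
          linarith
        have h5 : ε a e * e.weight i = -(((ε a e * e.weight i).natAbs : ℤ)) :=
          int_eq_neg_natAbs hneg
        have h6 : (ε a e * e.weight i).natAbs = (e.weight i).natAbs := by
          rcases hεa with h | h <;> rw [h] <;> simp
        have hA1 : ((∃ x ∈ e.carrier, x i < ζ) ∧ (∃ x ∈ e.carrier, ζ < x i)) :=
          hcross_iff.2 (Or.inr ⟨hbi, hai⟩)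
        rw [hFa, hFb, if_pos hA1, h5, h6]
        ring
      · -- both above
        have hFa : F a e = ε a e * e.weight i := by
          simp only [hF]; exact if_pos ⟨hai, hae⟩
        have hFb : F b e = ε b e * e.weight i := by
          simp only [hF]; exact if_pos ⟨hbi, hbe⟩
        have hc2 : 0 < c^2 := by positivity
        have hprodneg : ((ε a e : ℝ)) * ((ε b e : ℝ)) < 0 := by
          rw [hεaeq, hεbeq]
          nlinarith [mul_pos (mul_pos hlama hlamb) hc2]
        have hsign : ε a e = - ε b e := by
          rcases hεa with h1 | h1 <;> rcases hεb with h2 | h2 <;>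
            rw [h1, h2] at hprodneg <;> norm_num at hprodneg <;> omega
        have hA0 : ¬ ((∃ x ∈ e.carrier, x i < ζ) ∧ (∃ x ∈ e.carrier, ζ < x i)) := by
          rw [hcross_iff]
          rintro (⟨h1, h2⟩ | ⟨h1, h2⟩) <;> linarith
        rw [hFa, hFb, if_neg hA0, hsign]
        ring
    · -- unbounded edge
      set q := v + s • u with hqdef
      have hviζ := hζv v hv
      have hvU : v ∈ interior (stdSimp n) := G.verts_mem v hv
      have hvmem := (mem_interior_stdSimp_iff hn0).1 hvU
      have hqcl : q ∈ closure e.carrier := by rw [hclos]; exact right_mem_segment ℝ v q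
      have hsub2 : ({v} : Finset (Euc n)) ⊆ G.verts := by
        intro x hx
        rw [Finset.mem_singleton] at hx
        subst hx
        exact hv
      have hsumv : ∑ w ∈ G.verts, F w e = F v e := by
        rw [← Finset.sum_singleton (fun w => F w e) v]
        refine (Finset.sum_subset hsub2 ?_).symm
        intro x _ hnx
        simp only [hF]
        apply if_neg
        rintro ⟨_, hxe⟩
        rw [hends] at hxe
        exact hnx hxe
      rw [hsumv]
      have hve : v ∈ e.ends := by rw [hends]; exact Finset.mem_singleton_self v
      obtain ⟨hεv, δ, hδ, hmem⟩ := (hε v hv).1 e he hve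
      rw [hcarr] at hmem
      obtain ⟨lam, hlam, hεveq⟩ := eps_ray hwR hcu hδ hmem hεv
      by_cases hjn : (j : ℕ) < n
      · -- near facet, index < n
        have hnor : e.weight = kk • (Pi.single (⟨j, hjn⟩ : Fin n) 1 : Fin n → ℤ) := by
          rw [hkk, sNormal_lt hjn]
        have hjlast : (Fin.last n : Fin (n+1)) ≠ j := by
          intro h
          rw [← h] at hjn
          exact last_not_lt hjn
        have hB0 : (∑ k' ∈ Finset.univ.filter
            (fun k' : Fin l => ζ < z k' i ∧ z k' ∈ closure e.carrier), (m k' : ℤ)) = 0 := by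
          apply Finset.sum_eq_zero
          intro k' hk'
          rw [Finset.mem_filter] at hk'
          exact absurd (huniq (Fin.last n) (z k') ⟨hk'.2.2, hz_facet k'⟩).2 hjlast
        rw [hB0]
        by_cases hij : i = (⟨j, hjn⟩ : Fin n)
        · -- crossing the i-th coordinate facet
          have hwi : e.weight i = kk := by rw [hnor, hij]; simp
          have hqi0' : (v + s • u) i = 0 := by
            have h1 := hqfac
            rw [sFacet_lt hjn] at h1
            have := h1.2
            rw [hij]
            exact this
          have hqiζ : (v + s • u) i ≠ ζ := by
            rw [hqi0']
            exact (ne_of_gt hζ0).symm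
          have hvipos : 0 < v i := hvmem.1 i
          have hqrel : (v + s • u) i = v i + s * u i := rfl
          have hui : u i < 0 := by
            by_contra h
            push_neg at h
            have h1 : 0 ≤ s * u i := mul_nonneg hs.le h
            rw [hqrel] at hqi0'
            linarith
          rcases lt_or_gt_of_ne hviζ with hvi | hvi
          · -- v below: no contribution, no crossing
            have hFv : F v e = 0 := by
              simp only [hF]; exact if_neg (fun hc' => absurd hc'.1 (not_lt.2 hvi.le))
            have hA0 : ¬ ((∃ x ∈ e.carrier, x i < ζ) ∧ (∃ x ∈ e.carrier, ζ < x i)) := by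
              rw [hcarr, cross_ray hs hviζ hqiζ]
              rw [hqi0']
              rintro (⟨h1, h2⟩ | ⟨h1, h2⟩) <;> linarith
            rw [hFv, if_neg hA0]
            norm_num
          · -- v above: contribution -|k|, crossing
            have hFv : F v e = ε v e * e.weight i := by
              simp only [hF]; exact if_pos ⟨hvi, hve⟩
            have huieq : u i = c * ((e.weight i : ℤ):ℝ) := by rw [hcu]; rfl
            have hreal : ((ε v e * e.weight i : ℤ):ℝ) = lam * u i := by
              push_cast
              rw [hεveq, huieq]
              ring
            have hneg : ((ε v e * e.weight i : ℤ):ℝ) < 0 := by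
              rw [hreal]
              exact mul_neg_of_pos_of_neg hlam hui
            have h5 : ε v e * e.weight i = -(((ε v e * e.weight i).natAbs : ℤ)) :=
              int_eq_neg_natAbs hneg
            have h6 : (ε v e * e.weight i).natAbs = (e.weight i).natAbs := by
              rcases hεv with h | h <;> rw [h] <;> simp
            have hA1 : ((∃ x ∈ e.carrier, x i < ζ) ∧ (∃ x ∈ e.carrier, ζ < x i)) := by
              rw [hcarr, cross_ray hs hviζ hqiζ]
              right
              rw [hqi0']
              exact ⟨hζ0, hvi⟩
            rw [hFv, if_pos hA1, h5, h6]
            ring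
        · -- parallel to the hyperplane
          have hwi : e.weight i = 0 := by
            rw [hnor]
            simp [Pi.single_apply, hij]
          have hFv : F v e = 0 := by
            simp only [hF]
            split_ifs with h
            · rw [hwi, mul_zero]
            · rfl
          have hui : u i = 0 := by
            have huieq : u i = c * ((e.weight i : ℤ):ℝ) := by rw [hcu]; rfl
            rw [huieq, hwi]
            norm_num
          have hA0 : ¬ ((∃ x ∈ e.carrier, x i < ζ) ∧ (∃ x ∈ e.carrier, ζ < x i)) := by
            rintro ⟨⟨x, hx, hxl⟩, ⟨y, hy, hyg⟩⟩
            rw [hcarr] at hx hy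
            obtain ⟨t, _, rfl⟩ := hx
            obtain ⟨r, _, rfl⟩ := hy
            have h1 : v i + t * u i < ζ := hxl
            have h2 : ζ < v i + r * u i := hyg
            rw [hui, mul_zero] at h1 h2
            linarith
          rw [hFv, if_neg hA0]
          norm_num
      · -- far facet
        have hjlast : j = Fin.last n := fin_eq_last_of_not_lt hjn
        subst hjlast
        have hnor : e.weight = kk • ((fun _ => 1) : Fin n → ℤ) := by
          rw [hkk, sNormal_not_lt last_not_lt]
        have hwi : e.weight i = kk := by rw [hnor]; simp
        have hum : ∀ mm, u mm = c * ((kk:ℤ):ℝ) := by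
          intro mm
          have huieq : u mm = c * ((e.weight mm : ℤ):ℝ) := by rw [hcu]; rfl
          rw [huieq, hnor]
          norm_num
        have hdir : 0 < c * ((kk:ℤ):ℝ) := dir_pos hn0 hvU hs hqfac hum
        have huipos : 0 < u i := by rw [hum i]; exact hdir
        have hqrel : (v + s • u) i = v i + s * u i := rfl
        have hqgt : v i < (v + s • u) i := by
          rw [hqrel]
          nlinarith [mul_pos hs huipos]
        obtain ⟨k0, hk0cl, hk0m, hk0uniq⟩ :=
          top_struct hn0 G hG hzinj hzrange hm he ⟨q, hqcl, hqfac⟩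
        have hzk0q : z k0 = q := (huniq (Fin.last n) (z k0) ⟨hk0cl, hz_facet k0⟩).1
        have hmult : e.mult = kk.natAbs := mult_of_normal_last hn0 hnor
        have hqiζ : (v + s • u) i ≠ ζ := by
          have : z k0 i ≠ ζ := hζz k0
          rwa [hzk0q] at this
        have hBe : (∑ k' ∈ Finset.univ.filter
            (fun k' : Fin l => ζ < z k' i ∧ z k' ∈ closure e.carrier), (m k' : ℤ)) =
            if ζ < (v + s • u) i then (kk.natAbs : ℤ) else 0 := by
          by_cases hq : ζ < (v + s • u) i
          · rw [if_pos hq]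
            have hfil : Finset.univ.filter
                (fun k' : Fin l => ζ < z k' i ∧ z k' ∈ closure e.carrier) = {k0} := by
              ext k'
              simp only [Finset.mem_filter, Finset.mem_univ, true_and, Finset.mem_singleton]
              constructor
              · rintro ⟨_, h2⟩
                exact hk0uniq k' h2
              · rintro rfl
                refine ⟨?_, hk0cl⟩
                rw [hzk0q]
                exact hq
            rw [hfil, Finset.sum_singleton, hk0m, hmult]
          · rw [if_neg hq]
            apply Finset.sum_eq_zero
            intro k' hk'
            rw [Finset.mem_filter] at hk'
            exfalso
            have h8 := hk0uniq k' hk'.2.2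
            apply hq
            have h9 := hk'.2.1
            rw [h8, hzk0q] at h9
            exact h9
        rw [hBe]
        rcases lt_or_gt_of_ne hviζ with hvi | hvi
        · -- v below
          have hFv : F v e = 0 := by
            simp only [hF]; exact if_neg (fun hc' => absurd hc'.1 (not_lt.2 hvi.le))
          rw [hFv]
          by_cases hq : ζ < (v + s • u) i
          · have hA1 : ((∃ x ∈ e.carrier, x i < ζ) ∧ (∃ x ∈ e.carrier, ζ < x i)) := by
              rw [hcarr, cross_ray hs hviζ hqiζ]
              exact Or.inl ⟨hvi, hq⟩
            rw [if_pos hq, if_pos hA1, hwi]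
            ring
          · have hA0 : ¬ ((∃ x ∈ e.carrier, x i < ζ) ∧ (∃ x ∈ e.carrier, ζ < x i)) := by
              rw [hcarr, cross_ray hs hviζ hqiζ]
              rintro (⟨h1, h2⟩ | ⟨h1, h2⟩)
              · exact hq h2
              · linarith
            rw [if_neg hq, if_neg hA0]
            norm_num
        · -- v above
          have hFv : F v e = ε v e * e.weight i := by
            simp only [hF]; exact if_pos ⟨hvi, hve⟩
          have hreal : ((ε v e * e.weight i : ℤ):ℝ) = lam * u i := by
            push_cast
            rw [hεveq, hum i, hwi]
            push_cast
            ring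
          have hpos : 0 < ((ε v e * e.weight i : ℤ):ℝ) := by
            rw [hreal]
            exact mul_pos hlam huipos
          have h5 : ε v e * e.weight i = ((ε v e * e.weight i).natAbs : ℤ) :=
            int_eq_natAbs hpos
          have h6 : (ε v e * e.weight i).natAbs = (e.weight i).natAbs := by
            rcases hεv with h | h <;> rw [h] <;> simp
          have hA0 : ¬ ((∃ x ∈ e.carrier, x i < ζ) ∧ (∃ x ∈ e.carrier, ζ < x i)) := by
            rw [hcarr, cross_ray hs hviζ hqiζ]
            rintro (⟨h1, _⟩ | ⟨h1, _⟩) <;> linarith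
          have hq : ζ < (v + s • u) i := lt_trans hvi hqgt
          rw [hFv, if_pos hq, if_neg hA0, h5, h6, hwi]
          omega
  -- assemble
  have hEq : ∑ e ∈ G.edges, (∑ k' ∈ Finset.univ.filter
        (fun k' : Fin l => ζ < z k' i ∧ z k' ∈ closure e.carrier), (m k' : ℤ)) =
      ∑ e ∈ G.edges, (if (∃ x ∈ e.carrier, x i < ζ) ∧ (∃ x ∈ e.carrier, ζ < x i)
        then ((e.weight i).natAbs : ℤ) else 0) := by
    have h1 := Finset.sum_congr rfl hedge
    rw [htot, Finset.sum_sub_distrib] at h1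
    linarith [h1]
  have hswap : ∑ e ∈ G.edges, (∑ k' ∈ Finset.univ.filter
        (fun k' : Fin l => ζ < z k' i ∧ z k' ∈ closure e.carrier), (m k' : ℤ)) =
      ∑ k' ∈ Finset.univ.filter (fun k' : Fin l => ζ < z k' i), (m k' : ℤ) := by
    have h1 : ∀ e ∈ G.edges, (∑ k' ∈ Finset.univ.filter
          (fun k' : Fin l => ζ < z k' i ∧ z k' ∈ closure e.carrier), (m k' : ℤ)) =
        ∑ k' : Fin l, if ζ < z k' i ∧ z k' ∈ closure e.carrier then (m k' : ℤ) else 0 :=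
      fun e _ => Finset.sum_filter _ _
    rw [Finset.sum_congr rfl h1, Finset.sum_comm, Finset.sum_filter]
    apply Finset.sum_congr rfl
    intro k' _
    by_cases hζk : ζ < z k' i
    · rw [if_pos hζk]
      have h2 : ∀ e ∈ G.edges,
          (if ζ < z k' i ∧ z k' ∈ closure e.carrier then (m k' : ℤ) else 0)
          = if z k' ∈ closure e.carrier then (m k' : ℤ) else 0 := by
        intro e _
        by_cases h : z k' ∈ closure e.carrier
        · rw [if_pos ⟨hζk, h⟩, if_pos h]
        · rw [if_neg (fun hc' => h hc'.2), if_neg h]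
      rw [Finset.sum_congr rfl h2, ← Finset.sum_filter]
      obtain ⟨e0, he0, hfil⟩ := hz_filter k'
      rw [hfil, Finset.sum_singleton]
    · rw [if_neg hζk]
      exact Finset.sum_eq_zero fun e _ => if_neg (fun hc' => hζk hc'.1)
  have hall : ∑ k' : Fin l, (m k' : ℤ) = (d : ℤ) := by
    have h1 : ∀ k' : Fin l, (m k' : ℤ) = ∑ e ∈ G.edges,
        (if z k' ∈ closure e.carrier then (m k' : ℤ) else 0) := by
      intro k'
      obtain ⟨e0, he0, hfil⟩ := hz_filter k'
      rw [← Finset.sum_filter, hfil, Finset.sum_singleton]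
    rw [Finset.sum_congr rfl fun k' _ => h1 k', Finset.sum_comm]
    have h2 : ∀ e ∈ G.edges,
        (∑ k' : Fin l, if z k' ∈ closure e.carrier then (m k' : ℤ) else 0)
        = if (closure e.carrier ∩ sFacet n (Fin.last n)).Nonempty then (e.mult : ℤ) else 0 := by
      intro e he
      by_cases htop : (closure e.carrier ∩ sFacet n (Fin.last n)).Nonempty
      · rw [if_pos htop]
        obtain ⟨k0, hk0cl, hk0m, hk0uniq⟩ := top_struct hn0 G hG hzinj hzrange hm he htop
        have hfil : Finset.univ.filter (fun k' : Fin l => z k' ∈ closure e.carrier) = {k0} := by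
          ext k'
          simp only [Finset.mem_filter, Finset.mem_univ, true_and, Finset.mem_singleton]
          exact ⟨fun h => hk0uniq k' h, fun h => h ▸ hk0cl⟩
        rw [← Finset.sum_filter, hfil, Finset.sum_singleton, hk0m]
      · rw [if_neg htop]
        apply Finset.sum_eq_zero
        intro k' _
        apply if_neg
        intro hcl
        exact htop ⟨z k', hcl, hz_facet k'⟩
    rw [Finset.sum_congr rfl h2]
    have h3 : ∑ e ∈ G.edges, (if (closure e.carrier ∩ sFacet n (Fin.last n)).Nonempty
        then (e.mult : ℤ) else 0) = ((facetCount G (Fin.last n) : ℕ) : ℤ) := by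
      rw [show (facetCount G (Fin.last n)) = ∑ e ∈ G.edges.filter
        (fun e => (closure e.carrier ∩ sFacet n (Fin.last n)).Nonempty), e.mult from rfl]
      push_cast
      rw [Finset.sum_filter]
    rw [h3, hd]
  have hsplit2 : ∑ k' ∈ Finset.univ.filter (fun k' : Fin l => ζ < z k' i), (m k' : ℤ) +
      ∑ k' ∈ Finset.univ.filter (fun k' : Fin l => z k' i < ζ), (m k' : ℤ) = (d : ℤ) := by
    rw [← hall, ← Finset.sum_filter_add_sum_filter_not Finset.univ
      (fun k' : Fin l => ζ < z k' i) (fun k' => (m k' : ℤ))]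
    congr 1
    apply Finset.sum_congr _ (fun _ _ => rfl)
    apply Finset.filter_congr
    intro k' _
    constructor
    · intro h
      exact not_lt.2 h.le
    · intro h
      exact lt_of_le_of_ne (not_lt.1 h) (hζz k')
  rw [Finset.sum_filter]
  linarith [hEq, hswap, hsplit2]
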